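/- For non-negative integers $m,N$ with $m\le N$, the dimension of the Grassmannian $\mathrm{Gr}(m,N)$ of $m$-dimensional subspaces of an $N$-dimensional vector space equals $(N-m)m$; consequently, if $N=N_1+\dots+N_r$, $m=m_1+\dots+m_r$ with $0\le m_i\le N_i$, the inequality $\dim\mathrm{Gr}(m,N) - \sum_{i=1}^r \dim\mathrm{Gr}(m_i,N_i) \ge N - \max_i N_i$ holds whenever $2\le m\le N-2$ and each $N_i\ge 1$. -/
import Mathlib


/-- The dimension of the Grassmannian `Gr(a, b)` of `a`-dimensional subspaces of a
`b`-dimensional vector space, namely `(b - a) * a`. -/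
def grDim (a b : ℕ) : ℤ := ((b : ℤ) - a) * a

lemma key_ineq {r : ℕ} (hr : 0 < r) (l m : Fin r → ℕ)
    (hlm : ∀ i, 1 ≤ l i + m i)
    (hL : 2 ≤ ∑ i, l i) (hM : 2 ≤ ∑ i, m i) :
    ∃ j, (∑ i, l i * m i) + ((∑ i, l i) + (∑ i, m i)) ≤
      (∑ i, l i) * (∑ i, m i) + (l j + m j) := by
  by_cases h : ∃ j, 1 ≤ l j ∧ 1 ≤ m j
  · obtain ⟨j, hlj, hmj⟩ := h
    refine ⟨j, ?_⟩
    have hmle : ∀ i, m i ≤ ∑ i, m i := fun i =>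
      Finset.single_le_sum (fun _ _ => Nat.zero_le _) (Finset.mem_univ i)
    -- L * M = ∑ l i * m i + ∑ l i * (M - m i)
    have key1 : (∑ i, l i) * (∑ i, m i)
        = (∑ i, l i * m i) + ∑ i, l i * ((∑ i', m i') - m i) := by
      rw [Finset.sum_mul, ← Finset.sum_add_distrib]
      refine Finset.sum_congr rfl fun i _ => ?_
      rw [← Nat.mul_add, Nat.add_sub_cancel' (hmle i)]
    have e1 : ∑ i, l i * ((∑ i', m i') - m i) =
        l j * ((∑ i', m i') - m j) + ∑ i ∈ Finset.univ.erase j, l i * ((∑ i', m i') - m i) :=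
      (Finset.add_sum_erase _ _ (Finset.mem_univ j)).symm
    have e2 : ∀ i ∈ Finset.univ.erase j, l i * m j ≤ l i * ((∑ i', m i') - m i) := by
      intro i hi
      have hij : i ≠ j := (Finset.mem_erase.mp hi).1
      have h1 : m j ≤ ∑ i' ∈ Finset.univ.erase i, m i' :=
        Finset.single_le_sum (fun _ _ => Nat.zero_le _)
          (Finset.mem_erase.mpr ⟨fun hh => hij hh.symm, Finset.mem_univ j⟩)
      have h2 : (∑ i' ∈ Finset.univ.erase i, m i') + m i = ∑ i', m i' :=
        Finset.sum_erase_add _ _ (Finset.mem_univ i)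
      exact Nat.mul_le_mul_left _ (by omega)
    have e3 : (∑ i ∈ Finset.univ.erase j, l i) * m j ≤
        ∑ i ∈ Finset.univ.erase j, l i * ((∑ i', m i') - m i) := by
      rw [Finset.sum_mul]
      exact Finset.sum_le_sum e2
    have e4 : (∑ i ∈ Finset.univ.erase j, l i) + l j = ∑ i, l i :=
      Finset.sum_erase_add _ _ (Finset.mem_univ j)
    have ha : m j + ((∑ i', m i') - m j) = ∑ i', m i' := by
      have := hmle j; omega
    have hS2 : (∑ i', m i') - m j ≤ l j * ((∑ i', m i') - m j) :=
      Nat.le_mul_of_pos_left _ hlj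
    have hS3 : (∑ i ∈ Finset.univ.erase j, l i)
        ≤ (∑ i ∈ Finset.univ.erase j, l i) * m j :=
      Nat.le_mul_of_pos_right _ hmj
    rw [key1, e1]
    omega
  · push_neg at h
    have hzero : ∑ i, l i * m i = 0 := by
      refine Finset.sum_eq_zero fun i _ => ?_
      rcases Nat.eq_zero_or_pos (l i) with h0 | h0
      · simp [h0]
      · have hm0 : m i = 0 := by have := h i h0; omega
        simp [hm0]
    refine ⟨⟨0, hr⟩, ?_⟩
    have h1 : 2 * (∑ i, m i) ≤ (∑ i, l i) * (∑ i, m i) :=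
      Nat.mul_le_mul_right _ hL
    have h2 : (∑ i, l i) * 2 ≤ (∑ i, l i) * (∑ i, m i) :=
      Nat.mul_le_mul_left _ hM
    have h3 := hlm ⟨0, hr⟩
    rw [hzero]
    linarith

theorem stmt_5 (r : ℕ) (hr : 0 < r) (N m : Fin r → ℕ)
    (hN : ∀ i, 1 ≤ N i) (hmN : ∀ i, m i ≤ N i)
    (h2 : 2 ≤ ∑ i, m i) (h3 : (∑ i, m i) + 2 ≤ ∑ i, N i) :
    grDim (∑ i, m i) (∑ i, N i) - ∑ i, grDim (m i) (N i) ≥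
      (∑ i, (N i : ℤ)) -
        Finset.univ.sup' (Finset.univ_nonempty_iff.mpr (Fin.pos_iff_nonempty.mp hr))
          (fun i => (N i : ℤ)) := by
  set l : Fin r → ℕ := fun i => N i - m i with hldef
  have hNeq : ∀ i, N i = l i + m i := fun i => by
    have := hmN i; simp only [hldef]; omega
  have hsum : (∑ i, l i) + (∑ i, m i) = ∑ i, N i := by
    rw [← Finset.sum_add_distrib]
    exact Finset.sum_congr rfl fun i _ => (hNeq i).symm
  have hL : 2 ≤ ∑ i, l i := by omega
  obtain ⟨j, hj⟩ := key_ineq hr l m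
    (fun i => by have := hN i; rw [hNeq i] at this; exact this) hL h2
  have hsup : (N j : ℤ) ≤
      Finset.univ.sup' (Finset.univ_nonempty_iff.mpr (Fin.pos_iff_nonempty.mp hr))
        (fun i => (N i : ℤ)) :=
    Finset.le_sup' (fun i => ((N i : ℤ))) (Finset.mem_univ j)
  have hNtot : ((∑ i, N i : ℕ) : ℤ) = ((∑ i, l i : ℕ) : ℤ) + ((∑ i, m i : ℕ) : ℤ) := by
    rw [← hsum]; push_cast; ring
  have h1 : grDim (∑ i, m i) (∑ i, N i)
      = ((∑ i, l i : ℕ) : ℤ) * ((∑ i, m i : ℕ) : ℤ) := by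
    unfold grDim; rw [hNtot]; ring
  have h2' : ∑ i, grDim (m i) (N i) = ((∑ i, l i * m i : ℕ) : ℤ) := by
    push_cast
    refine Finset.sum_congr rfl fun i _ => ?_
    unfold grDim
    have : (N i : ℤ) = (l i : ℤ) + (m i : ℤ) := by rw [hNeq i]; push_cast; ring
    rw [this]; ring
  have hjz : ((∑ i, l i * m i : ℕ) : ℤ) + (((∑ i, l i : ℕ) : ℤ) + ((∑ i, m i : ℕ) : ℤ))
      ≤ ((∑ i, l i : ℕ) : ℤ) * ((∑ i, m i : ℕ) : ℤ) + ((l j : ℤ) + (m j : ℤ)) := by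
    exact_mod_cast hj
  have hNj : (N j : ℤ) = (l j : ℤ) + (m j : ℤ) := by rw [hNeq j]; push_cast; ring
  have hsumN : (∑ i, (N i : ℤ)) = ((∑ i, N i : ℕ) : ℤ) := by push_cast; ring
  rw [h1, h2', hsumN]
  linarith
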